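/- arXiv:1809.04743 — 2 statements merged into one kernel-verified Lean document; each statement's English description precedes it below -/
import Mathlib

section
/- Let 0 < α < 2, and let β ≥ 0 with β > α (case i). Suppose A generates an (α,β)-ROF R_{α,β} on a Banach space X such that ‖R_{α,β}(t)‖ = O(t^{β-α-ε}) as t → ∞ for some 0 < ε < β - α. Then X = {0}. -/
open MeasureTheory Set

/-- The Wright function `φ(ρ, μ; z) = ∑ z^k/(k! Γ(ρk+μ))`. -/
noncomputable def wright (ρ : ℝ) (μ : ℂ) (z : ℂ) : ℂ :=
  ∑' k : ℕ, z ^ k / ((k.factorial : ℂ) * Complex.Gamma ((ρ : ℂ) * k + μ))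

/-- Bessel function of the first kind of real order `ν` at a real argument. -/
noncomputable def besselJ (ν : ℝ) (x : ℝ) : ℝ :=
  (x / 2) ^ ν * ∑' k : ℕ, (-1 : ℝ) ^ k * (x / 2) ^ (2 * k) /
    ((k.factorial : ℝ) * Real.Gamma (ν + k + 1))

/-- Mittag-Leffler function. -/
noncomputable def mittagLeffler (a m : ℝ) (z : ℂ) : ℂ :=
  ∑' k : ℕ, z ^ k / Complex.Gamma ((a : ℂ) * k + m)

variable {X : Type*} [NormedAddCommGroup X] [NormedSpace ℂ X]

/-- `R` is the (bounded, everywhere-defined) resolvent `(z - A)⁻¹` of the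
(possibly unbounded) linear operator `A`; i.e. `z ∈ ρ(A)`. -/
structure IsResolventOf (A : X →ₗ.[ℂ] X) (z : ℂ) (R : X →L[ℂ] X) : Prop where
  mem : ∀ x : X, R x ∈ A.domain
  right : ∀ x : X, z • R x - A ⟨R x, mem x⟩ = x
  left : ∀ y : A.domain, R (z • (y : X) - A y) = y

/-- The open sector of half-angle `θ` around the positive real axis. -/
def sect (θ : ℝ) : Set ℂ := {z : ℂ | z ≠ 0 ∧ |Complex.arg z| < θ}

/-- `A` is sectorial of angle `ω`: the spectrum lies in the closed sector of angle `ω`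
(resolvents exist outside) and `‖z(z-A)⁻¹‖` is uniformly bounded outside each bigger
closed sector. -/
def IsSectorial (A : X →ₗ.[ℂ] X) (ω : ℝ) : Prop :=
  (∀ z ∈ (closure (sect ω))ᶜ, ∃ R : X →L[ℂ] X, IsResolventOf A z R) ∧
  ∀ ω' ∈ Set.Ioo ω Real.pi, ∃ M : ℝ,
    ∀ z ∈ (closure (sect ω'))ᶜ, ∀ R : X →L[ℂ] X, IsResolventOf A z R → ‖z‖ * ‖R‖ ≤ M

/-- `B = A⁻¹` as an unbounded operator. -/
def IsInverseOf (B A : X →ₗ.[ℂ] X) : Prop :=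
  (∀ x : A.domain, ∃ h : A x ∈ B.domain, B ⟨A x, h⟩ = (x : X)) ∧
  (∀ y : B.domain, ∃ h : B y ∈ A.domain, A ⟨B y, h⟩ = (y : X))

/-- Riemann–Liouville fractional integral of order `μ > 0`. -/
noncomputable def fracInt (μ : ℝ) (f : ℝ → X) (t : ℝ) : X :=
  ∫ s in Set.Ioo 0 t, ((t - s) ^ (μ - 1) / Real.Gamma μ) • f s

/-- `S` is a `β`-times integrated `α`-resolvent operator function generated by `A`,
with exponential bound `M e^{ω t}`. -/
structure IsROF (A : X →ₗ.[ℂ] X) (α β : ℝ) (S : ℝ → X →L[ℂ] X) (ω M : ℝ) : Prop where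
  cont : ∀ x : X, ContinuousOn (fun t : ℝ => S t x) (Set.Ici 0)
  bound : ∀ t : ℝ, 0 ≤ t → ‖S t‖ ≤ M * Real.exp (ω * t)
  laplace : ∀ l : ℝ, ω < l → ∃ R : X →L[ℂ] X,
    IsResolventOf A ((l ^ α : ℝ) : ℂ) R ∧
    ∀ x : X, ((l ^ (α - β - 1) : ℝ) : ℂ) • R x =
      ∫ t in Set.Ioi (0 : ℝ), Real.exp (-(l * t)) • S t x

/-- `S` is a tempered `β`-times integrated `α`-resolvent operator function generated
by `A`: `‖S t‖ ≤ M t^β` and the Laplace-transform identity holds for all `λ > 0`. -/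
structure IsTemperedROF (A : X →ₗ.[ℂ] X) (α β : ℝ) (S : ℝ → X →L[ℂ] X) (M : ℝ) : Prop where
  cont : ∀ x : X, ContinuousOn (fun t : ℝ => S t x) (Set.Ici 0)
  bound : ∀ t : ℝ, 0 ≤ t → ‖S t‖ ≤ M * t ^ β
  laplace : ∀ l : ℝ, 0 < l → ∃ R : X →L[ℂ] X,
    IsResolventOf A ((l ^ α : ℝ) : ℂ) R ∧
    ∀ x : X, ((l ^ (α - β - 1) : ℝ) : ℂ) • R x =
      ∫ t in Set.Ioi (0 : ℝ), Real.exp (-(l * t)) • S t x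


set_option linter.unusedSectionVars false
set_option linter.unusedVariables false
set_option maxHeartbeats 1000000

section AuxLemmas

private lemma aux_int_rpow_exp {c p : ℝ} (hc : 0 < c) (hp : -1 < p) :
    IntegrableOn (fun t : ℝ => t ^ p * Real.exp (-(c * t))) (Ioi 0) := by
  have h := integrableOn_rpow_mul_exp_neg_mul_rpow (p := 1) hp one_pos hc
  refine h.congr_fun (fun x hx => ?_) measurableSet_Ioi
  simp only [Real.rpow_one, neg_mul]

private lemma aux_val_rpow_exp {c p : ℝ} (hc : 0 < c) (hp : -1 < p) :
    ∫ t in Ioi (0:ℝ), t ^ p * Real.exp (-(c * t)) = c ^ (-(p+1)) * Real.Gamma (p+1) := by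
  have h := integral_rpow_mul_exp_neg_mul_rpow one_pos hp hc
  simp only [Real.rpow_one, div_one, one_mul, neg_mul] at h
  rw [h]; ring

variable {X : Type*} [NormedAddCommGroup X] [NormedSpace ℂ X]

private lemma aux_cont_integrand {f : ℝ → X} (hcont : ContinuousOn f (Ici 0)) (z : ℂ) :
    ContinuousOn (fun t : ℝ => Complex.exp (-(z * t)) • f t) (Ioi 0) := by
  have h1 : Continuous fun t : ℝ => Complex.exp (-(z * t)) := by
    exact Complex.continuous_exp.comp ((continuous_const.mul Complex.continuous_ofReal).neg)
  exact (h1.continuousOn).smul (hcont.mono Ioi_subset_Ici_self)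

private lemma aux_C_nonneg {f : ℝ → X} {C g0 : ℝ} (hg : 0 < g0)
    (hbd : ∀ t, 0 ≤ t → ‖f t‖ ≤ C * (1 + t ^ g0)) : 0 ≤ C := by
  have h := hbd 0 le_rfl
  rw [Real.zero_rpow hg.ne'] at h
  simpa using (norm_nonneg (f 0)).trans h

private lemma aux_norm_integrand {f : ℝ → X} {C g0 : ℝ} (hg : 0 < g0)
    (hbd : ∀ t, 0 ≤ t → ‖f t‖ ≤ C * (1 + t ^ g0)) {z : ℂ} {t : ℝ} (ht : 0 < t) :
    ‖Complex.exp (-(z * t)) • f t‖ ≤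
      C * (t ^ (0:ℝ) * Real.exp (-(z.re * t))) + C * (t ^ g0 * Real.exp (-(z.re * t))) := by
  have hC := aux_C_nonneg hg hbd
  have h1 : ‖Complex.exp (-(z * t)) • f t‖ = Real.exp (-(z.re * t)) * ‖f t‖ := by
    rw [norm_smul, Complex.norm_exp]
    congr 2
    simp [Complex.mul_re]
  rw [h1, Real.rpow_zero, one_mul]
  have h2 : Real.exp (-(z.re * t)) * ‖f t‖ ≤ Real.exp (-(z.re * t)) * (C * (1 + t ^ g0)) :=
    mul_le_mul_of_nonneg_left (hbd t ht.le) (Real.exp_pos _).le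
  refine h2.trans (le_of_eq ?_)
  ring

private lemma laplace_integrable {f : ℝ → X} {C g0 : ℝ} (hg : 0 < g0)
    (hcont : ContinuousOn f (Ici 0)) (hbd : ∀ t, 0 ≤ t → ‖f t‖ ≤ C * (1 + t ^ g0))
    {z : ℂ} (hz : 0 < z.re) :
    IntegrableOn (fun t : ℝ => Complex.exp (-(z * t)) • f t) (Ioi 0) := by
  refine Integrable.mono' (g := fun t => C * (t ^ (0:ℝ) * Real.exp (-(z.re * t)))
      + C * (t ^ g0 * Real.exp (-(z.re * t)))) ?_ ?_ ?_
  · exact ((aux_int_rpow_exp hz (by norm_num)).const_mul C).add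
      ((aux_int_rpow_exp hz (by linarith)).const_mul C)
  · exact (aux_cont_integrand hcont z).aestronglyMeasurable measurableSet_Ioi
  · rw [ae_restrict_iff' measurableSet_Ioi]
    exact Filter.Eventually.of_forall fun t ht => aux_norm_integrand hg hbd ht

private lemma laplace_norm_le {f : ℝ → X} {C g0 : ℝ} (hg : 0 < g0)
    (hcont : ContinuousOn f (Ici 0)) (hbd : ∀ t, 0 ≤ t → ‖f t‖ ≤ C * (1 + t ^ g0))
    {l : ℝ} (hl : 0 < l) :
    ‖∫ t in Ioi (0:ℝ), Complex.exp (-((l:ℂ) * t)) • f t‖ ≤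
      C * (l ^ (-1:ℝ) + l ^ (-(g0+1)) * Real.Gamma (g0+1)) := by
  have hzre : (0:ℝ) < ((l:ℂ)).re := by simpa using hl
  have h := norm_integral_le_of_norm_le (μ := volume.restrict (Ioi 0))
    (f := fun t : ℝ => Complex.exp (-((l:ℂ) * t)) • f t)
    (g := fun t => C * (t ^ (0:ℝ) * Real.exp (-(((l:ℂ)).re * t)))
      + C * (t ^ g0 * Real.exp (-(((l:ℂ)).re * t))))
    (((aux_int_rpow_exp hzre (by norm_num)).const_mul C).add
      ((aux_int_rpow_exp hzre (by linarith)).const_mul C))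
    (by rw [ae_restrict_iff' measurableSet_Ioi]
        exact Filter.Eventually.of_forall fun t ht => aux_norm_integrand hg hbd ht)
  refine h.trans (le_of_eq ?_)
  rw [integral_add (((aux_int_rpow_exp hzre (by norm_num)).const_mul C))
      (((aux_int_rpow_exp hzre (by linarith)).const_mul C)),
    MeasureTheory.integral_const_mul, MeasureTheory.integral_const_mul]
  simp only [Complex.ofReal_re] at *
  rw [aux_val_rpow_exp hl (by norm_num), aux_val_rpow_exp hl (by linarith)]
  norm_num [Real.Gamma_one]
  ring

private lemma laplace_analytic [CompleteSpace X] {f : ℝ → X} {C g0 : ℝ} (hg : 0 < g0)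
    (hcont : ContinuousOn f (Ici 0)) (hbd : ∀ t, 0 ≤ t → ‖f t‖ ≤ C * (1 + t ^ g0)) :
    AnalyticOnNhd ℂ (fun z => ∫ t in Ioi (0:ℝ), Complex.exp (-(z * t)) • f t)
      {z : ℂ | 0 < z.re} := by
  have hC := aux_C_nonneg hg hbd
  have hopen : IsOpen {z : ℂ | 0 < z.re} := isOpen_lt continuous_const Complex.continuous_re
  refine DifferentiableOn.analyticOnNhd (fun z₀ hz₀ => ?_) hopen
  simp only [mem_setOf_eq] at hz₀
  set ε : ℝ := z₀.re / 2 with hε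
  have hεpos : 0 < ε := by positivity
  have hkey := hasDerivAt_integral_of_dominated_loc_of_deriv_le
    (μ := volume.restrict (Ioi 0))
    (F := fun z (t : ℝ) => Complex.exp (-(z * t)) • f t)
    (F' := fun z (t : ℝ) => (-(t:ℂ) * Complex.exp (-(z * t))) • f t)
    (x₀ := z₀)
    (bound := fun t => C * (t ^ (1:ℝ) * Real.exp (-(ε * t)))
      + C * (t ^ (g0+1) * Real.exp (-(ε * t))))
    (Metric.ball_mem_nhds z₀ hεpos) ?_ ?_ ?_ ?_ ?_ ?_
  · exact hkey.2.differentiableAt.differentiableWithinAt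
  · exact Filter.Eventually.of_forall fun z =>
      (aux_cont_integrand hcont z).aestronglyMeasurable measurableSet_Ioi
  · exact laplace_integrable hg hcont hbd hz₀
  · have h1 : Continuous fun t : ℝ => -(t:ℂ) * Complex.exp (-(z₀ * t)) := by
      exact (Complex.continuous_ofReal.neg).mul
        (Complex.continuous_exp.comp ((continuous_const.mul Complex.continuous_ofReal).neg))
    exact ((h1.continuousOn).smul (hcont.mono Ioi_subset_Ici_self)).aestronglyMeasurable
      measurableSet_Ioi
  · rw [ae_restrict_iff' measurableSet_Ioi]
    refine Filter.Eventually.of_forall fun t ht x hx => ?_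
    have htpos : (0:ℝ) < t := ht
    have hxre : ε ≤ x.re := by
      have h1 : |(x - z₀).re| ≤ ‖x - z₀‖ := Complex.abs_re_le_norm _
      have h2 : ‖x - z₀‖ < ε := by simpa [Metric.mem_ball, dist_eq_norm] using hx
      have := abs_lt.mp (lt_of_le_of_lt h1 h2)
      simp only [Complex.sub_re] at this
      have := this.1
      simp only [hε] at *
      linarith
    have hnorm : ‖(-(t:ℂ) * Complex.exp (-(x * t))) • f t‖
        = t * (Real.exp (-(x.re * t)) * ‖f t‖) := by
      have hre : (-(x * (t:ℂ))).re = -(x.re * t) := by simp [Complex.mul_re]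
      rw [norm_smul, norm_mul, norm_neg, Complex.norm_real, Complex.norm_exp, hre,
        Real.norm_eq_abs, abs_of_pos htpos]
      ring
    rw [hnorm]
    have hexp : Real.exp (-(x.re * t)) ≤ Real.exp (-(ε * t)) := by
      apply Real.exp_le_exp.mpr
      nlinarith
    have hft : ‖f t‖ ≤ C * (1 + t ^ g0) := hbd t htpos.le
    have h3 : t * (Real.exp (-(x.re * t)) * ‖f t‖)
        ≤ t * (Real.exp (-(ε * t)) * (C * (1 + t ^ g0))) := by
      apply mul_le_mul_of_nonneg_left _ htpos.le
      exact mul_le_mul hexp hft (norm_nonneg _) (Real.exp_pos _).le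
    refine h3.trans (le_of_eq ?_)
    show _ = C * (t ^ (1:ℝ) * Real.exp (-(ε * t))) + C * (t ^ (g0+1) * Real.exp (-(ε * t)))
    rw [Real.rpow_add htpos, Real.rpow_one]
    ring
  · exact ((aux_int_rpow_exp hεpos (by norm_num)).const_mul C).add
      ((aux_int_rpow_exp hεpos (by linarith)).const_mul C)
  · rw [ae_restrict_iff' measurableSet_Ioi]
    refine Filter.Eventually.of_forall fun t ht x hx => ?_
    have h1 : HasDerivAt (fun z : ℂ => -(z * (t:ℂ))) (-(t:ℂ)) x := by
      have h0 := ((hasDerivAt_id' x).mul_const (t:ℂ)).neg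
      rw [one_mul] at h0
      exact h0
    have h3 := (h1.cexp).smul_const (f t)
    convert h3 using 2
    rw [mul_comm]
end AuxLemmas

theorem stmt10 {X : Type*} [NormedAddCommGroup X] [NormedSpace ℂ X]
    (A : X →ₗ.[ℂ] X) (alpha beta eps : ℝ) (halpha0 : 0 < alpha) (halpha2 : alpha < 2)
    (hbeta : alpha < beta) (heps0 : 0 < eps) (heps : eps < beta - alpha)
    (S : ℝ → X →L[ℂ] X) (omega M : ℝ) (hS : IsROF A alpha beta S omega M)
    (M2 : ℝ) (hbd : ∀ t : ℝ, 0 ≤ t → ‖S t‖ ≤ M2 * (1 + t ^ (beta - alpha - eps))) :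
    ∀ x : X, x = 0 := by
  intro x
  have hres0 : ∀ {z : ℂ} {R : X →L[ℂ] X}, IsResolventOf A z R → R x = 0 → x = 0 := by
    intro z R hR h
    have hr := hR.right x
    have hy : (⟨R x, hR.mem x⟩ : A.domain) = 0 := Subtype.ext h
    rw [hy] at hr
    simpa [h] using hr.symm
  set l₀ : ℝ := max omega 0 + 1 with hl₀def
  have hωl₀ : omega < l₀ := lt_of_le_of_lt (le_max_left _ _) (lt_add_one _)
  have hl₀pos : (0:ℝ) < l₀ := lt_of_le_of_lt (le_max_right _ _) (lt_add_one _)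
  obtain ⟨R, hR, hlap₀⟩ := hS.laplace l₀ hωl₀
  by_cases hcs : CompleteSpace X
  swap
  · have hzero : (∫ t in Ioi (0:ℝ), Real.exp (-(l₀ * t)) • S t x) = 0 := by
      rw [MeasureTheory.integral_def]
      exact dif_neg hcs
    have h0 : ((l₀ ^ (alpha - beta - 1) : ℝ) : ℂ) • R x = 0 := by
      rw [hlap₀ x, hzero]
    refine hres0 hR ?_
    have hne : ((l₀ ^ (alpha - beta - 1) : ℝ) : ℂ) ≠ 0 := by
      exact_mod_cast (Real.rpow_pos_of_pos hl₀pos _).ne'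
    exact (smul_eq_zero.mp h0).resolve_left hne
  · haveI := hcs
    set γ : ℝ := beta - alpha - eps with hγdef
    have hγ : 0 < γ := by rw [hγdef]; linarith
    set c₀ : ℝ := l₀ ^ alpha with hc₀def
    -- norm bound for S t u
    have hbdu : ∀ u : X, ∀ t : ℝ, 0 ≤ t → ‖S t u‖ ≤ (M2 * ‖u‖) * (1 + t ^ γ) := by
      intro u t ht
      calc ‖S t u‖ ≤ ‖S t‖ * ‖u‖ := (S t).le_opNorm u
        _ ≤ (M2 * (1 + t ^ γ)) * ‖u‖ :=
            mul_le_mul_of_nonneg_right (hbd t ht) (norm_nonneg u)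
        _ = (M2 * ‖u‖) * (1 + t ^ γ) := by ring
    have hcontu : ∀ u : X, ContinuousOn (fun t : ℝ => S t u) (Ici 0) := hS.cont
    -- the complex Laplace transform
    set g : ℂ → X → X := fun z u => ∫ t in Ioi (0:ℝ), Complex.exp (-(z * t)) • S t u
      with hgdef
    -- realization at real points l > omega
    have hreal : ∀ (l : ℝ) (Rl : X →L[ℂ] X),
        (∀ u : X, ((l ^ (alpha - beta - 1) : ℝ) : ℂ) • Rl u
          = ∫ t in Ioi (0:ℝ), Real.exp (-(l * t)) • S t u) →
        ∀ u : X, g l u = ((l ^ (alpha - beta - 1) : ℝ) : ℂ) • Rl u := by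
      intro l Rl hlapl u
      rw [hlapl u, hgdef]
      refine setIntegral_congr_fun measurableSet_Ioi (fun t ht => ?_)
      rw [← Complex.coe_smul]
      congr 1
      rw [Complex.ofReal_exp]
      congr 1
      push_cast
      ring
    -- resolvent identity for l > omega
    have hresid : ∀ (l : ℝ), omega < l → ∀ u : X, g l u =
        ((l ^ (alpha - beta - 1) : ℝ) : ℂ) • R u
          + ((c₀ - l ^ alpha : ℝ) : ℂ) • g l (R u) := by
      intro l hl u
      obtain ⟨Rl, hRl, hlapl⟩ := hS.laplace l hl
      have hgu := hreal l Rl hlapl u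
      have hgv := hreal l Rl hlapl (R u)
      -- A y = c₀ • R u - u
      have hAy : A ⟨R u, hR.mem u⟩ = ((c₀ : ℝ) : ℂ) • R u - u := by
        have h1 := hR.right u
        have h1' := sub_eq_iff_eq_add.mp h1
        rw [h1']; abel
      have h2 := hRl.left ⟨R u, hR.mem u⟩
      rw [hAy] at h2
      have h2' : Rl (((l ^ alpha : ℝ) : ℂ) • R u - (((c₀ : ℝ) : ℂ) • R u - u)) = R u := h2
      have h3 : ((l ^ alpha : ℝ) : ℂ) • Rl (R u) - ((c₀ : ℝ) : ℂ) • Rl (R u) + Rl u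
          = R u := by
        have hexp : Rl (((l ^ alpha : ℝ) : ℂ) • R u - (((c₀ : ℝ) : ℂ) • R u - u))
            = ((l ^ alpha : ℝ) : ℂ) • Rl (R u) - ((c₀ : ℝ) : ℂ) • Rl (R u) + Rl u := by
          simp only [_root_.map_sub, _root_.map_smul]
          abel
        rw [← hexp]
        exact h2'
      have h4 : Rl u = R u + ((c₀ - l ^ alpha : ℝ) : ℂ) • Rl (R u) := by
        set T := Rl (R u) with hTdef
        rw [← h3]
        push_cast
        module
      rw [hgu, hgv, h4]
      push_cast
      module
    -- analytic continuation to all l > 0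
    have hgall : ∀ u : X, ∀ l : ℝ, 0 < l → g l u =
        ((l ^ (alpha - beta - 1) : ℝ) : ℂ) • R u
          + ((c₀ - l ^ alpha : ℝ) : ℂ) • g l (R u) := by
      intro u l hl
      set v : X := R u with hvdef
      set H : ℂ → X := fun z => g z u - (z ^ ((alpha - beta - 1 : ℝ) : ℂ)) • R u
        - (((c₀ : ℝ) : ℂ) - z ^ ((alpha : ℝ) : ℂ)) • g z v with hHdef
      have hH0 : ∀ l' : ℝ, omega < l' → 0 < l' → H l' = 0 := by
        intro l' hl' hl'pos
        have hr := hresid l' hl' u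
        have hcp1 : ((l' : ℂ)) ^ ((alpha - beta - 1 : ℝ) : ℂ)
            = ((l' ^ (alpha - beta - 1) : ℝ) : ℂ) := (Complex.ofReal_cpow hl'pos.le _).symm
        have hcp2 : ((l' : ℂ)) ^ ((alpha : ℝ) : ℂ) = ((l' ^ alpha : ℝ) : ℂ) :=
          (Complex.ofReal_cpow hl'pos.le _).symm
        rw [hHdef]
        simp only [hcp1, hcp2, hr]
        push_cast
        module
      have hopen : IsOpen {z : ℂ | 0 < z.re} := isOpen_lt continuous_const Complex.continuous_re
      have hHan : AnalyticOnNhd ℂ H {z : ℂ | 0 < z.re} := by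
        refine DifferentiableOn.analyticOnNhd ?_ hopen
        intro z hz
        simp only [mem_setOf_eq] at hz
        have hslit : z ∈ Complex.slitPlane := Complex.mem_slitPlane_iff.mpr (Or.inl hz)
        have hgu : DifferentiableAt ℂ (fun z => g z u) z :=
          ((laplace_analytic hγ (hcontu u) (hbdu u)).differentiableOn.differentiableAt
            (hopen.mem_nhds hz))
        have hgv : DifferentiableAt ℂ (fun z => g z v) z :=
          ((laplace_analytic hγ (hcontu v) (hbdu v)).differentiableOn.differentiableAt
            (hopen.mem_nhds hz))
        have hcp1 : DifferentiableAt ℂ (fun z : ℂ => z ^ ((alpha - beta - 1 : ℝ) : ℂ)) z :=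
          ((hasDerivAt_id z).cpow_const hslit).differentiableAt
        have hcp2 : DifferentiableAt ℂ (fun z : ℂ => ((c₀ : ℝ) : ℂ) - z ^ ((alpha : ℝ) : ℂ)) z :=
          (differentiableAt_const _).sub ((hasDerivAt_id z).cpow_const hslit).differentiableAt
        exact ((hgu.sub (hcp1.smul (differentiableAt_const (R u)))).sub
          (hcp2.smul hgv)).differentiableWithinAt
      have hmem : ((l₀ : ℝ) : ℂ) ∈ {z : ℂ | 0 < z.re} := by simpa using hl₀pos
      have hfreq : ∃ᶠ z in nhdsWithin ((l₀ : ℝ) : ℂ) {((l₀ : ℝ) : ℂ)}ᶜ, H z = 0 := by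
        have hseq : Filter.Tendsto (fun n : ℕ => (((l₀ + 1 / (n + 1) : ℝ)) : ℂ))
            Filter.atTop (nhdsWithin ((l₀ : ℝ) : ℂ) {((l₀ : ℝ) : ℂ)}ᶜ) := by
          rw [tendsto_nhdsWithin_iff]
          constructor
          · have h1 : Filter.Tendsto (fun n : ℕ => (l₀ + 1 / (n + 1) : ℝ))
                Filter.atTop (nhds l₀) := by
              have := tendsto_one_div_add_atTop_nhds_zero_nat (𝕜 := ℝ)
              simpa using (tendsto_const_nhds.add this)
            exact (Complex.continuous_ofReal.continuousAt.tendsto.comp h1)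
          · refine Filter.Eventually.of_forall fun n => ?_
            simp only [mem_compl_iff, mem_singleton_iff]
            intro hcon
            have : (l₀ + 1 / (n + 1) : ℝ) = l₀ := by exact_mod_cast hcon
            have hpos : (0:ℝ) < 1 / (n + 1) := by positivity
            linarith
        refine hseq.frequently (Filter.Eventually.of_forall fun n => ?_).frequently
        have hpos : (0:ℝ) < 1 / (n + 1 : ℝ) := by positivity
        exact hH0 _ (by linarith) (by linarith)
      have hHeq := hHan.eqOn_zero_of_preconnected_of_frequently_eq_zero
        ((convex_halfSpace_re_gt 0).isPreconnected) hmem hfreq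
      have hHl : H l = 0 := hHeq (by simpa using hl)
      have hcp1 : ((l : ℂ)) ^ ((alpha - beta - 1 : ℝ) : ℂ)
          = ((l ^ (alpha - beta - 1) : ℝ) : ℂ) := (Complex.ofReal_cpow hl.le _).symm
      have hcp2 : ((l : ℂ)) ^ ((alpha : ℝ) : ℂ) = ((l ^ alpha : ℝ) : ℂ) :=
        (Complex.ofReal_cpow hl.le _).symm
      rw [hHdef] at hHl
      simp only [hcp1, hcp2] at hHl
      rw [sub_sub, sub_eq_zero] at hHl
      push_cast
      push_cast at hHl
      exact hHl
    -- integrability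
    have hint : ∀ (u : X) {l : ℝ}, 0 < l →
        IntegrableOn (fun t : ℝ => Complex.exp (-((l:ℂ) * t)) • S t u) (Ioi 0) := by
      intro u l hl
      exact laplace_integrable hγ (hcontu u) (hbdu u) (by simpa using hl)
    -- linearity of g in the vector variable
    have hgsmul : ∀ (a : ℂ) (u : X) (l : ℝ), g l (a • u) = a • g l u := by
      intro a u l
      rw [hgdef]
      simp only [_root_.map_smul]
      rw [← integral_smul]
      congr 1
      funext t
      rw [smul_comm]
    have hgsub : ∀ (u w : X) (l : ℝ), 0 < l → g l (u - w) = g l u - g l w := by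
      intro u w l hl
      rw [hgdef]
      simp only [_root_.map_sub, smul_sub]
      exact integral_sub (hint u hl) (hint w hl)
    -- scalar identity
    have hone : ∀ l : ℝ, 0 < l →
        ((l ^ (beta + 1 - alpha) : ℝ) : ℂ) * ((l ^ (alpha - beta - 1) : ℝ) : ℂ) = 1 := by
      intro l hl
      rw [← Complex.ofReal_mul, ← Real.rpow_add hl]
      have he : beta + 1 - alpha + (alpha - beta - 1) = 0 := by ring
      rw [he, Real.rpow_zero]
      norm_num
    -- extended identity, multiplied form
    have hEu : ∀ (u : X) (l : ℝ), 0 < l →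
        ((l ^ (beta + 1 - alpha) : ℝ) : ℂ) • g l u
          = R u + ((c₀ - l ^ alpha : ℝ) : ℂ) •
              (((l ^ (beta + 1 - alpha) : ℝ) : ℂ) • g l (R u)) := by
      intro u l hl
      rw [hgall u l hl, smul_add, smul_smul, hone l hl, one_smul, smul_comm]
    -- norm bound
    have hPnorm : ∀ (u : X) (l : ℝ), 0 < l →
        ‖((l ^ (beta + 1 - alpha) : ℝ) : ℂ) • g l u‖
          ≤ (M2 * ‖u‖) * (l ^ (beta - alpha) + l ^ eps * Real.Gamma (γ + 1)) := by
      intro u l hl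
      have h1 := laplace_norm_le hγ (hcontu u) (hbdu u) hl
      have h2 : ‖((l ^ (beta + 1 - alpha) : ℝ) : ℂ) • g l u‖
          = l ^ (beta + 1 - alpha) * ‖g l u‖ := by
        rw [norm_smul, Complex.norm_real, Real.norm_eq_abs,
          abs_of_pos (Real.rpow_pos_of_pos hl _)]
      rw [h2]
      calc l ^ (beta + 1 - alpha) * ‖g l u‖
          ≤ l ^ (beta + 1 - alpha) *
            ((M2 * ‖u‖) * (l ^ (-1:ℝ) + l ^ (-(γ+1)) * Real.Gamma (γ+1))) :=
            mul_le_mul_of_nonneg_left h1 (Real.rpow_pos_of_pos hl _).le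
        _ = (M2 * ‖u‖) * (l ^ (beta - alpha) + l ^ eps * Real.Gamma (γ+1)) := by
            rw [show beta - alpha = beta + 1 - alpha + (-1:ℝ) by ring,
              show eps = beta + 1 - alpha + (-(γ+1)) by simp only [hγdef]; ring,
              Real.rpow_add hl, Real.rpow_add hl]
            ring
    -- Step 1 : the domain of A is trivial
    have hdom : ∀ y : A.domain, (y : X) = 0 := by
      intro y
      set w : X := A y with hwdef
      have hRw : R w = ((c₀ : ℝ) : ℂ) • R (y : X) - (y : X) := by
        have h1 := hR.left y
        have h2 : ((c₀ : ℝ) : ℂ) • R (y : X) - R w = (y : X) := by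
          rw [← _root_.map_smul, ← _root_.map_sub]
          exact h1
        have h3 := sub_eq_iff_eq_add.mp h2
        rw [h3]; abel
      have hkey : ∀ l : ℝ, 0 < l → (y : X) =
          ((l ^ alpha : ℝ) : ℂ) • (((l ^ (beta + 1 - alpha) : ℝ) : ℂ) • g l (y : X))
            - ((l ^ (beta + 1 - alpha) : ℝ) : ℂ) • g l w := by
        intro l hl
        have e1 := hEu (y : X) l hl
        have e2 := hEu w l hl
        have e3 : g l (R w) = ((c₀ : ℝ) : ℂ) • g l (R (y : X)) - g l (y : X) := by
          rw [hRw, hgsub _ _ l hl, hgsmul]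
        rw [e2, e3, hRw, smul_sub, smul_comm ((l ^ (beta + 1 - alpha) : ℝ) : ℂ)
          ((c₀ : ℝ) : ℂ), e1]
        push_cast
        module
      have hbound : ∀ l : ℝ, 0 < l → ‖(y : X)‖ ≤
          l ^ alpha * ((M2 * ‖(y : X)‖) * (l ^ (beta - alpha) + l ^ eps * Real.Gamma (γ+1)))
            + (M2 * ‖w‖) * (l ^ (beta - alpha) + l ^ eps * Real.Gamma (γ+1)) := by
        intro l hl
        have hk := hkey l hl
        calc ‖(y : X)‖
            = ‖((l ^ alpha : ℝ) : ℂ) • (((l ^ (beta + 1 - alpha) : ℝ) : ℂ) • g l (y : X))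
              - ((l ^ (beta + 1 - alpha) : ℝ) : ℂ) • g l w‖ := by rw [← hk]
          _ ≤ ‖((l ^ alpha : ℝ) : ℂ) • (((l ^ (beta + 1 - alpha) : ℝ) : ℂ) • g l (y : X))‖
              + ‖((l ^ (beta + 1 - alpha) : ℝ) : ℂ) • g l w‖ := norm_sub_le _ _
          _ ≤ l ^ alpha * ((M2 * ‖(y : X)‖) * (l ^ (beta - alpha) + l ^ eps * Real.Gamma (γ+1)))
              + (M2 * ‖w‖) * (l ^ (beta - alpha) + l ^ eps * Real.Gamma (γ+1)) := by
              have n1 : ‖((l ^ alpha : ℝ) : ℂ) •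
                  (((l ^ (beta + 1 - alpha) : ℝ) : ℂ) • g l (y : X))‖
                  = l ^ alpha * ‖((l ^ (beta + 1 - alpha) : ℝ) : ℂ) • g l (y : X)‖ := by
                rw [norm_smul, Complex.norm_real, Real.norm_eq_abs,
                  abs_of_pos (Real.rpow_pos_of_pos hl _)]
              rw [n1]
              exact add_le_add
                (mul_le_mul_of_nonneg_left (hPnorm (y : X) l hl)
                  (Real.rpow_pos_of_pos hl _).le)
                (hPnorm w l hl)
      have hT : ∀ p : ℝ, 0 < p →
          Filter.Tendsto (fun l : ℝ => l ^ p) (nhdsWithin 0 (Ioi 0)) (nhds 0) := by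
        intro p hp
        have hc : ContinuousAt (fun l : ℝ => l ^ p) 0 :=
          Real.continuousAt_rpow_const 0 p (Or.inr hp.le)
        have h1 := hc.tendsto
        rw [Real.zero_rpow hp.ne'] at h1
        exact h1.mono_left nhdsWithin_le_nhds
      have htend : Filter.Tendsto (fun l : ℝ =>
          l ^ alpha * ((M2 * ‖(y : X)‖) * (l ^ (beta - alpha) + l ^ eps * Real.Gamma (γ+1)))
            + (M2 * ‖w‖) * (l ^ (beta - alpha) + l ^ eps * Real.Gamma (γ+1)))
          (nhdsWithin 0 (Ioi 0)) (nhds 0) := by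
        have hba : (0:ℝ) < beta - alpha := by linarith
        have h1 := ((hT alpha halpha0).mul
            ((tendsto_const_nhds (x := (M2 * ‖(y : X)‖))).mul
              (((hT _ hba).add ((hT eps heps0).mul
                (tendsto_const_nhds (x := Real.Gamma (γ+1)))))))).add
          ((tendsto_const_nhds (x := (M2 * ‖w‖))).mul
            (((hT _ hba).add ((hT eps heps0).mul
              (tendsto_const_nhds (x := Real.Gamma (γ+1)))))))
        simpa using h1
      have hle : ‖(y : X)‖ ≤ 0 :=
        ge_of_tendsto htend (Filter.eventually_of_mem self_mem_nhdsWithin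
          (fun l hl => hbound l hl))
      exact norm_le_zero_iff.mp hle
    exact hres0 hR (hdom ⟨R x, hR.mem x⟩)
end

section
/- Let A generate a (2,1)-ROF (sine operator function) R_{2,1} on X satisfying the functional equation 2 R_{2,1}(t) R_{2,1}(s) x = ∫_{t-s}^{t+s} R_{2,1}(τ) x dτ for t ≥ s ≥ 0 and x ∈ X. If ‖R_{2,1}(t)‖ = O(t^{-ε}) as t → ∞ for some 0 < ε < 1, then X = {0}. -/
open MeasureTheory Set

variable {X : Type*} [NormedAddCommGroup X] [NormedSpace ℂ X]

section Helpers
open MeasureTheory Set Filter Topology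


-- helper: ∫_{Ioi T} exp(-(l t)) dt
lemma myexpint {l : ℝ} (hl : 0 < l) (T : ℝ) :
    (∫ t in Ioi T, Real.exp (-(l * t))) = l⁻¹ * Real.exp (-(l * T)) := by
  have h := integral_comp_mul_left_Ioi (fun x => Real.exp (-x)) T hl
  simp only [integral_exp_neg_Ioi, smul_eq_mul] at h
  exact h

-- helper: integrability of exp-damped bounded continuous functions (real form)
lemma myint_real {X : Type*} [NormedAddCommGroup X] [NormedSpace ℝ X]
    {f : ℝ → X} {c : ℝ} (hf : ContinuousOn f (Ici 0)) (hbd : ∀ t, 0 ≤ t → ‖f t‖ ≤ c)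
    {l : ℝ} (hl : 0 < l) :
    IntegrableOn (fun t => Real.exp (-(l * t)) • f t) (Ioi 0) := by
  have hmeas : AEStronglyMeasurable (fun t => Real.exp (-(l * t)) • f t)
      (volume.restrict (Ioi (0:ℝ))) := by
    apply ContinuousOn.aestronglyMeasurable _ measurableSet_Ioi
    exact ((Real.continuous_exp.comp (continuous_const.mul continuous_id).neg).continuousOn).smul
      (hf.mono Ioi_subset_Ici_self)
  refine ((exp_neg_integrableOn_Ioi 0 hl).const_mul c).mono' hmeas ?_
  filter_upwards [ae_restrict_mem measurableSet_Ioi] with t ht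
  rw [norm_smul, Real.norm_eq_abs, abs_of_pos (Real.exp_pos _)]
  calc Real.exp (-(l*t)) * ‖f t‖ ≤ Real.exp (-(l*t)) * c :=
        mul_le_mul_of_nonneg_left (hbd t (le_of_lt ht)) (Real.exp_pos _).le
    _ = c * Real.exp (-(l*t)) := mul_comm _ _
    _ = c * Real.exp (-l*t) := by rw [neg_mul]

-- helper: integrability, complex form
lemma myint_cx {X : Type*} [NormedAddCommGroup X] [NormedSpace ℂ X]
    {f : ℝ → X} {c : ℝ} (hf : ContinuousOn f (Ici 0)) (hbd : ∀ t, 0 ≤ t → ‖f t‖ ≤ c)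
    {lam : ℂ} (hl : 0 < lam.re) :
    IntegrableOn (fun t : ℝ => Complex.exp (-(lam * t)) • f t) (Ioi 0) := by
  have hmeas : AEStronglyMeasurable (fun t : ℝ => Complex.exp (-(lam * t)) • f t)
      (volume.restrict (Ioi (0:ℝ))) := by
    apply ContinuousOn.aestronglyMeasurable _ measurableSet_Ioi
    refine Continuous.continuousOn ?_ |>.smul (hf.mono Ioi_subset_Ici_self)
    exact Complex.continuous_exp.comp (continuous_const.mul Complex.continuous_ofReal).neg
  refine ((exp_neg_integrableOn_Ioi 0 hl).const_mul c).mono' hmeas ?_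
  filter_upwards [ae_restrict_mem measurableSet_Ioi] with t ht
  rw [norm_smul, Complex.norm_exp]
  have hre : (-(lam * (t:ℂ))).re = -(lam.re * t) := by simp [Complex.mul_re]
  rw [hre]
  calc Real.exp (-(lam.re*t)) * ‖f t‖ ≤ Real.exp (-(lam.re*t)) * c :=
        mul_le_mul_of_nonneg_left (hbd t (le_of_lt ht)) (Real.exp_pos _).le
    _ = c * Real.exp (-(lam.re*t)) := mul_comm _ _
    _ = c * Real.exp (-lam.re*t) := by rw [neg_mul]

lemma myexpintb {l : ℝ} (hl : 0 < l) (c T : ℝ) :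
    IntegrableOn (fun t => c * Real.exp (-(l * t))) (Ioi T) := by
  have h := (exp_neg_integrableOn_Ioi T hl).const_mul c
  simp only [neg_mul] at h
  exact h


set_option maxHeartbeats 1000000 in
lemma myFdiff {X : Type*} [NormedAddCommGroup X] [NormedSpace ℂ X] [CompleteSpace X]
    {S : ℝ → X →L[ℂ] X} {K : ℝ}
    (hcont : ∀ x : X, ContinuousOn (fun t : ℝ => S t x) (Set.Ici 0))
    (hK : ∀ t : ℝ, 0 ≤ t → ‖S t‖ ≤ K) (v : X) :
    DifferentiableOn ℂ (fun lam : ℂ => ∫ t in Set.Ioi (0:ℝ), Complex.exp (-(lam * t)) • S t v)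
      {lam : ℂ | 0 < lam.re} := by
  have hKv : ∀ t : ℝ, 0 ≤ t → ‖S t v‖ ≤ K * ‖v‖ := fun t ht =>
    le_trans ((S t).le_opNorm v) (mul_le_mul_of_nonneg_right (hK t ht) (norm_nonneg v))
  intro lam hlam
  have hlam' : 0 < lam.re := hlam
  set a : ℝ := lam.re / 2 with ha
  have ha0 : 0 < a := by positivity
  -- derivative of the integrand
  have hD : ∀ (t : ℝ) (mu : ℂ), HasDerivAt (fun lam' : ℂ => Complex.exp (-(lam' * t)) • S t v)
      ((Complex.exp (-(mu * t)) * (-(t:ℂ))) • S t v) mu := by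
    intro t mu
    have h1 : HasDerivAt (fun lam' : ℂ => -(lam' * t)) (-(t:ℂ)) mu := by
      have h0 := ((hasDerivAt_id mu).mul_const (t:ℂ)).neg
      simp only [one_mul, id_eq] at h0
      exact h0
    exact ((Complex.hasDerivAt_exp _).comp mu h1).smul_const (S t v)
  have hmeas : ∀ mu : ℂ, AEStronglyMeasurable
      (fun t : ℝ => Complex.exp (-(mu * t)) • S t v) (volume.restrict (Ioi (0:ℝ))) := by
    intro mu
    apply ContinuousOn.aestronglyMeasurable _ measurableSet_Ioi
    refine Continuous.continuousOn ?_ |>.smul ((hcont v).mono Ioi_subset_Ici_self)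
    exact Complex.continuous_exp.comp (continuous_const.mul Complex.continuous_ofReal).neg
  have h'meas : AEStronglyMeasurable
      (fun t : ℝ => (Complex.exp (-(lam * t)) * (-(t:ℂ))) • S t v)
      (volume.restrict (Ioi (0:ℝ))) := by
    apply ContinuousOn.aestronglyMeasurable _ measurableSet_Ioi
    refine Continuous.continuousOn ?_ |>.smul ((hcont v).mono Ioi_subset_Ici_self)
    exact (Complex.continuous_exp.comp
      (continuous_const.mul Complex.continuous_ofReal).neg).mul Complex.continuous_ofReal.neg
  have hint : IntegrableOn (fun t : ℝ => Complex.exp (-(lam * t)) • S t v) (Ioi 0) :=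
    myint_cx (hcont v) hKv hlam'
  -- the dominating function
  have hbound_int : Integrable (fun t : ℝ => (K * ‖v‖ * (2/a)) * Real.exp (-(a/2) * t))
      (volume.restrict (Ioi (0:ℝ))) :=
    (exp_neg_integrableOn_Ioi 0 (half_pos ha0)).const_mul (K * ‖v‖ * (2/a))
  have hbnd : ∀ᵐ (t : ℝ) ∂(volume.restrict (Ioi (0:ℝ))), ∀ mu ∈ Metric.ball lam a,
      ‖(Complex.exp (-(mu * t)) * (-(t:ℂ))) • S t v‖ ≤ (K * ‖v‖ * (2/a)) * Real.exp (-(a/2) * t) := by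
    filter_upwards [ae_restrict_mem measurableSet_Ioi] with t ht mu hmu
    have ht0 : (0:ℝ) < t := ht
    have hre : a < mu.re := by
      have h1 : |mu.re - lam.re| ≤ ‖mu - lam‖ := by
        simpa [Complex.sub_re] using Complex.abs_re_le_norm (mu - lam)
      have h2 : ‖mu - lam‖ < a := by
        simpa [Metric.mem_ball, Complex.dist_eq] using hmu
      have := abs_lt.mp (lt_of_le_of_lt h1 h2)
      have := this.1
      simp only [ha] at *
      linarith
    rw [norm_smul, norm_mul, Complex.norm_exp]
    have hre2 : (-(mu * (t:ℂ))).re = -(mu.re * t) := by simp [Complex.mul_re]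
    rw [hre2]
    have habs : ‖(-(t:ℂ))‖ = t := by
      rw [norm_neg, Complex.norm_real, Real.norm_eq_abs, abs_of_pos ht0]
    rw [habs]
    have hS : ‖S t v‖ ≤ K * ‖v‖ := hKv t ht0.le
    have e1 : Real.exp (-(mu.re * t)) ≤ Real.exp (-(a * t)) := by
      apply Real.exp_le_exp.mpr
      nlinarith
    have e2 : t ≤ (2/a) * Real.exp (a/2 * t) := by
      have h1 := Real.add_one_le_exp (a/2 * t)
      have h2 : (0:ℝ) < 2/a := div_pos two_pos ha0
      have h3 := mul_le_mul_of_nonneg_left h1 h2.le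
      have h4 : 2/a * (a/2*t+1) = t + 2/a := by field_simp
      nlinarith
    have e3 : Real.exp (-(a * t)) * Real.exp (a/2 * t) = Real.exp (-(a/2) * t) := by
      rw [← Real.exp_add]; ring_nf
    have hKv0 : 0 ≤ K * ‖v‖ := le_trans (norm_nonneg _) hS
    calc Real.exp (-(mu.re * t)) * t * ‖S t v‖
        ≤ Real.exp (-(a * t)) * ((2/a) * Real.exp (a/2 * t)) * (K * ‖v‖) := by
          apply mul_le_mul _ hS (norm_nonneg _) (by positivity)
          exact mul_le_mul e1 e2 ht0.le (Real.exp_pos _).le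
      _ = K * ‖v‖ * (2/a) * (Real.exp (-(a * t)) * Real.exp (a/2 * t)) := by ring
      _ = K * ‖v‖ * (2/a) * Real.exp (-(a/2) * t) := by rw [e3]
  have hdiffae : ∀ᵐ (t : ℝ) ∂(volume.restrict (Ioi (0:ℝ))), ∀ mu ∈ Metric.ball lam a,
      HasDerivAt (fun lam' : ℂ => Complex.exp (-(lam' * t)) • S t v)
        ((Complex.exp (-(mu * t)) * (-(t:ℂ))) • S t v) mu :=
    Eventually.of_forall fun t mu _ => hD t mu
  have key := hasDerivAt_integral_of_dominated_loc_of_deriv_le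
    (F := fun (mu : ℂ) (t : ℝ) => Complex.exp (-(mu * t)) • S t v)
    (F' := fun (mu : ℂ) (t : ℝ) => (Complex.exp (-(mu * t)) * (-(t:ℂ))) • S t v)
    (x₀ := lam) (s := Metric.ball lam a)
    (bound := fun t : ℝ => (K * ‖v‖ * (2/a)) * Real.exp (-(a/2) * t))
    (Metric.ball_mem_nhds lam ha0) (Eventually.of_forall hmeas) hint h'meas hbnd hbound_int hdiffae
  exact key.2.differentiableAt.differentiableWithinAt

end Helpers

open MeasureTheory Set Filter Topology in
set_option maxHeartbeats 1600000 in
theorem stmt12 {X : Type*} [NormedAddCommGroup X] [NormedSpace ℂ X]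
    (A : X →ₗ.[ℂ] X) (S : ℝ → X →L[ℂ] X) (omega M : ℝ) (hS : IsROF A 2 1 S omega M)
    (hfe : ∀ t s : ℝ, 0 ≤ s → s ≤ t → ∀ x : X,
      (2 : ℝ) • S t (S s x) = ∫ τ in (t - s)..(t + s), S τ x)
    (eps C : ℝ) (heps0 : 0 < eps) (heps1 : eps < 1)
    (hdecay : ∀ t : ℝ, 1 ≤ t → ‖S t‖ ≤ C * t ^ (-eps)) :
    ∀ x : X, x = 0 := by
  intro x
  by_cases hX : CompleteSpace X
  case neg =>
    obtain ⟨R, hres, hlap⟩ := hS.laplace (max omega 0 + 1)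
      (lt_of_le_of_lt (le_max_left omega 0) (lt_add_one _))
    have hR0 : ∀ v : X, R v = 0 := by
      intro v
      have h := hlap v
      rw [show ((2:ℝ) - 1 - 1) = 0 by norm_num, Real.rpow_zero, Complex.ofReal_one, one_smul] at h
      rw [h, MeasureTheory.integral_def]
      simp [hX]
    have hx := hres.right x
    have hz : (⟨R x, hres.mem x⟩ : A.domain) = 0 := Subtype.ext (hR0 x)
    rw [hz, hR0 x] at hx
    simpa using hx.symm
  case pos =>
    haveI : CompleteSpace X := hX
    -- constants
    have hM0 : 0 ≤ M := le_trans (norm_nonneg (S 0)) (by simpa using hS.bound 0 le_rfl)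
    have hC0 : 0 ≤ C := by
      have h1 := hdecay 1 le_rfl
      rw [Real.one_rpow] at h1
      exact le_trans (norm_nonneg _) (by linarith)
    set K : ℝ := max (M * Real.exp |omega|) C with hKdef
    have hK : ∀ t : ℝ, 0 ≤ t → ‖S t‖ ≤ K := by
      intro t ht
      rcases le_total t 1 with h1 | h1
      · refine le_trans (hS.bound t ht) (le_trans ?_ (le_max_left _ _))
        refine mul_le_mul_of_nonneg_left ?_ hM0
        apply Real.exp_le_exp.mpr
        calc omega * t ≤ |omega| * t := mul_le_mul_of_nonneg_right (le_abs_self omega) ht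
          _ ≤ |omega| * 1 := mul_le_mul_of_nonneg_left h1 (abs_nonneg _)
          _ = |omega| := mul_one _
      · refine le_trans (hdecay t h1) (le_trans ?_ (le_max_right _ _))
        have h2 : t ^ (-eps) ≤ 1 := Real.rpow_le_one_of_one_le_of_nonpos h1 (by linarith)
        nlinarith [Real.rpow_nonneg (by linarith : (0:ℝ) ≤ t) (-eps)]
    have hK0 : 0 ≤ K := le_trans hC0 (le_max_right _ _)
    have hKv : ∀ (z : X) (t : ℝ), 0 ≤ t → ‖S t z‖ ≤ K * ‖z‖ := fun z t ht =>
      le_trans ((S t).le_opNorm z) (mul_le_mul_of_nonneg_right (hK t ht) (norm_nonneg z))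
    -- the primitive G
    set G : X → ℝ → X := fun z t => ∫ τ in (0:ℝ)..t, S τ z with hGdef
    have hSI : ∀ (z : X) (b : ℝ), 0 ≤ b → IntervalIntegrable (fun τ => S τ z) volume 0 b := by
      intro z b hb
      apply ContinuousOn.intervalIntegrable
      apply (hS.cont z).mono
      rw [uIcc_of_le hb]
      exact Icc_subset_Ici_self
    have hGsub : ∀ (z : X) (t₀ t : ℝ), 0 ≤ t₀ → 0 ≤ t →
        ‖G z t - G z t₀‖ ≤ K * ‖z‖ * |t - t₀| := by
      intro z t₀ t h0 h1
      have heq : G z t - G z t₀ = ∫ τ in t₀..t, S τ z :=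
        intervalIntegral.integral_interval_sub_left (hSI z t h1) (hSI z t₀ h0)
      rw [heq]
      apply intervalIntegral.norm_integral_le_of_norm_le_const
      intro τ hτ
      apply hKv
      have h2 : min t₀ t < τ := hτ.1
      have h3 : (0:ℝ) ≤ min t₀ t := le_min h0 h1
      linarith
    have hGcont : ∀ z : X, ContinuousOn (G z) (Ici 0) := by
      intro z
      have hlip : LipschitzOnWith (Real.toNNReal (K * ‖z‖)) (G z) (Ici 0) := by
        apply LipschitzOnWith.of_dist_le_mul
        intro t ht t' ht'
        rw [dist_eq_norm, Real.dist_eq]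
        refine le_trans (hGsub z t' t ht' ht) ?_
        exact mul_le_mul_of_nonneg_right (Real.le_coe_toNNReal _) (abs_nonneg _)
      exact hlip.continuousOn
    have hG0 : ∀ z : X, G z 0 = 0 := fun z => intervalIntegral.integral_same
    have hGfe : ∀ (z : X) (t : ℝ), 2 ≤ t → G z t = (2:ℝ) • S (t/2) (S (t/2) z) := by
      intro z t ht
      have h := hfe (t/2) (t/2) (by linarith) le_rfl z
      rw [sub_self, add_halves] at h
      exact h.symm
    have hGdec : ∀ (z : X) (t : ℝ), 2 ≤ t → ‖G z t‖ ≤ 2*C^2*‖z‖ * (t/2) ^ (-eps) := by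
      intro z t ht
      have h2 : (1:ℝ) ≤ t/2 := by linarith
      have hr0 : (0:ℝ) ≤ (t/2) ^ (-eps) := Real.rpow_nonneg (by linarith) _
      have hr1 : (t/2) ^ (-eps) ≤ 1 := Real.rpow_le_one_of_one_le_of_nonpos h2 (by linarith)
      have hs1 : ‖S (t/2) z‖ ≤ C * (t/2) ^ (-eps) * ‖z‖ :=
        le_trans ((S _).le_opNorm z) (mul_le_mul_of_nonneg_right (hdecay _ h2) (norm_nonneg z))
      have hs2 : ‖S (t/2) (S (t/2) z)‖ ≤ C * (t/2) ^ (-eps) * (C * (t/2) ^ (-eps) * ‖z‖) := by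
        refine le_trans ((S _).le_opNorm _) ?_
        exact mul_le_mul (hdecay _ h2) hs1 (norm_nonneg _) (mul_nonneg hC0 hr0)
      rw [hGfe z t ht]
      have hnn : ‖(2:ℝ) • S (t/2) (S (t/2) z)‖ = 2 * ‖S (t/2) (S (t/2) z)‖ := by
        rw [norm_smul]; norm_num
      rw [hnn]
      nlinarith [norm_nonneg z, norm_nonneg (S (t/2) (S (t/2) z)),
        mul_nonneg (mul_nonneg (mul_nonneg (mul_nonneg hC0 hC0) (norm_nonneg z)) hr0)
          (by linarith : (0:ℝ) ≤ 1 - (t/2) ^ (-eps))]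
    set B : ℝ := 2*K + 2*C^2 with hBdef
    have hB0 : 0 ≤ B := by nlinarith [hK0, sq_nonneg C]
    have hGbd : ∀ (z : X) (t : ℝ), 0 ≤ t → ‖G z t‖ ≤ B * ‖z‖ := by
      intro z t ht
      have hBz : B * ‖z‖ = 2*(K*‖z‖) + 2*(C^2*‖z‖) := by rw [hBdef]; ring
      rcases le_total t 2 with h2 | h2
      · have h3 := hGsub z 0 t le_rfl ht
        rw [hG0 z, sub_zero, sub_zero, abs_of_nonneg ht] at h3
        have h4 : K*‖z‖*t ≤ K*‖z‖*2 :=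
          mul_le_mul_of_nonneg_left h2 (mul_nonneg hK0 (norm_nonneg z))
        have h5 : (0:ℝ) ≤ C^2*‖z‖ := mul_nonneg (sq_nonneg C) (norm_nonneg z)
        linarith
      · have h3 := hGdec z t h2
        have hr1 : (t/2:ℝ) ^ (-eps) ≤ 1 :=
          Real.rpow_le_one_of_one_le_of_nonpos (by linarith) (by linarith)
        have hr0 : (0:ℝ) ≤ (t/2:ℝ) ^ (-eps) := Real.rpow_nonneg (by linarith) _
        have h6 : (0:ℝ) ≤ 2*C^2*‖z‖ := by positivity
        have h4 : 2*C^2*‖z‖*(t/2)^(-eps) ≤ 2*C^2*‖z‖*1 := mul_le_mul_of_nonneg_left hr1 h6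
        have h5 : (0:ℝ) ≤ K*‖z‖ := mul_nonneg hK0 (norm_nonneg z)
        nlinarith
    -- integration by parts
    have hIBP : ∀ (z : X) (l : ℝ), 0 < l →
        (∫ t in Ioi (0:ℝ), Real.exp (-(l * t)) • S t z) =
          l • ∫ t in Ioi (0:ℝ), Real.exp (-(l * t)) • G z t := by
      intro z l hl
      have int1 : IntegrableOn (fun t => Real.exp (-(l * t)) • S t z) (Ioi 0) :=
        myint_real (hS.cont z) (fun t ht => hKv z t ht) hl
      have int2 : IntegrableOn (fun t => Real.exp (-(l * t)) • G z t) (Ioi 0) :=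
        myint_real (hGcont z) (fun t ht => hGbd z t ht) hl
      have hderiv : ∀ t ∈ Ioi (0:ℝ), HasDerivAt (fun u => Real.exp (-(l * u)) • G z u)
          (Real.exp (-(l * t)) • S t z + (-l) • (Real.exp (-(l * t)) • G z t)) t := by
        intro t ht
        have ht0 : (0:ℝ) < t := ht
        have hexp : HasDerivAt (fun u : ℝ => Real.exp (-(l * u)))
            (Real.exp (-(l * t)) * (-l)) t := by
          have h1 : HasDerivAt (fun u : ℝ => -(l * u)) (-l) t := by
            have h0 := ((hasDerivAt_id t).const_mul l).neg
            simp only [mul_one, id_eq] at h0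
            exact h0
          exact (Real.hasDerivAt_exp _).comp t h1
        have hGd : HasDerivAt (G z) (S t z) t := by
          have hm : StronglyMeasurableAtFilter (fun τ => S τ z) (𝓝 t) volume :=
            ((hS.cont z).mono Ioi_subset_Ici_self).stronglyMeasurableAtFilter isOpen_Ioi t ht
          have hc : ContinuousAt (fun τ => S τ z) t :=
            (hS.cont z).continuousAt (mem_nhds_iff.mpr ⟨Ioi 0, Ioi_subset_Ici_self, isOpen_Ioi, ht⟩)
          exact intervalIntegral.integral_hasDerivAt_right (hSI z t ht0.le) hm hc
        have hmain := hexp.smul hGd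
        have h2 : ((-l) : ℝ) • (Real.exp (-(l * t)) • G z t)
            = (Real.exp (-(l * t)) * (-l)) • G z t := by rw [smul_smul, mul_comm]
        rw [h2]
        exact hmain
      have hcont0 : ContinuousWithinAt (fun u => Real.exp (-(l * u)) • G z u) (Ici 0) 0 := by
        refine ContinuousWithinAt.smul (f := fun u : ℝ => Real.exp (-(l * u))) ?_ ?_
        · exact (Real.continuous_exp.comp (continuous_const.mul continuous_id).neg).continuousWithinAt
        · exact (hGcont z) 0 self_mem_Ici
      have htend : Tendsto (fun u => Real.exp (-(l * u)) • G z u) atTop (𝓝 0) := by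
        apply squeeze_zero_norm' (a := fun t => (B * ‖z‖) * Real.exp (-(l * t)))
        · filter_upwards [eventually_ge_atTop (0:ℝ)] with t ht
          rw [norm_smul, Real.norm_eq_abs, abs_of_pos (Real.exp_pos _)]
          calc Real.exp (-(l*t)) * ‖G z t‖ ≤ Real.exp (-(l*t)) * (B * ‖z‖) :=
                mul_le_mul_of_nonneg_left (hGbd z t ht) (Real.exp_pos _).le
            _ = (B * ‖z‖) * Real.exp (-(l*t)) := mul_comm _ _
        · have h1 : Tendsto (fun t : ℝ => l * t) atTop atTop :=
            Tendsto.const_mul_atTop hl tendsto_id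
          have h2 : Tendsto (fun t : ℝ => Real.exp (-(l * t))) atTop (𝓝 0) :=
            Real.tendsto_exp_neg_atTop_nhds_zero.comp h1
          simpa using h2.const_mul (B * ‖z‖)
      have int2' : IntegrableOn (fun t => (-l) • (Real.exp (-(l * t)) • G z t)) (Ioi 0) :=
        int2.smul (-l)
      have hintsum : IntegrableOn (fun t => Real.exp (-(l * t)) • S t z
          + (-l) • (Real.exp (-(l * t)) • G z t)) (Ioi 0) := int1.add int2'
      have hFTC := MeasureTheory.integral_Ioi_of_hasDerivAt_of_tendsto hcont0 hderiv hintsum htend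
      rw [MeasureTheory.integral_add int1 int2', MeasureTheory.integral_smul] at hFTC
      simp only [mul_zero, neg_zero, Real.exp_zero, one_smul, hG0, sub_zero, zero_sub] at hFTC
      have h4 := add_eq_zero_iff_eq_neg.mp hFTC
      rw [h4, neg_smul, neg_neg]
    -- real and complex Laplace transforms agree at real points
    have hFrealeq : ∀ (v : X) (l : ℝ),
        (∫ t in Ioi (0:ℝ), Complex.exp (-((l:ℂ) * t)) • S t v) =
          ∫ t in Ioi (0:ℝ), Real.exp (-(l * t)) • S t v := by
      intro v l
      refine MeasureTheory.integral_congr_ae (Filter.Eventually.of_forall fun t => ?_)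
      show Complex.exp (-((l:ℂ) * t)) • S t v = Real.exp (-(l * t)) • S t v
      rw [← Complex.coe_smul]
      congr 1
      rw [Complex.ofReal_exp]
      norm_cast
    -- every element of the domain of A vanishes
    have hdom : ∀ y : A.domain, (y : X) = 0 := by
      intro y
      set w : X := (y : X) with hwdef
      set z : X := A y with hzdef
      have hray : ∀ l : ℝ, max omega 0 < l →
          ((l:ℂ)^2) • (∫ t in Ioi (0:ℝ), Complex.exp (-((l:ℂ) * t)) • S t w)
            - (∫ t in Ioi (0:ℝ), Complex.exp (-((l:ℂ) * t)) • S t z) = w := by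
        intro l hl
        have hl0 : (0:ℝ) < l := lt_of_le_of_lt (le_max_right omega 0) hl
        obtain ⟨R, hres, hlap⟩ := hS.laplace l (lt_of_le_of_lt (le_max_left omega 0) hl)
        have hcoe : ∀ u : X, R u = ∫ t in Ioi (0:ℝ), Real.exp (-(l * t)) • S t u := by
          intro u
          have h := hlap u
          rw [show ((2:ℝ) - 1 - 1) = 0 by norm_num, Real.rpow_zero, Complex.ofReal_one,
            one_smul] at h
          exact h
        have hc2 : ((l ^ (2:ℝ) : ℝ) : ℂ) = (l:ℂ)^2 := by
          rw [show (2:ℝ) = ((2:ℕ):ℝ) by norm_num, Real.rpow_natCast]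
          push_cast
          ring
        have hleft : R (((l ^ (2:ℝ) : ℝ) : ℂ) • w - z) = w := hres.left y
        rw [hcoe] at hleft
        have hexp2 : (∫ t in Ioi (0:ℝ), Real.exp (-(l * t)) • S t (((l ^ (2:ℝ) : ℝ):ℂ) • w - z))
            = ((l:ℂ)^2) • (∫ t in Ioi (0:ℝ), Real.exp (-(l * t)) • S t w)
              - (∫ t in Ioi (0:ℝ), Real.exp (-(l * t)) • S t z) := by
          have heq : (fun t : ℝ => Real.exp (-(l * t)) • S t (((l ^ (2:ℝ) : ℝ):ℂ) • w - z))
              = fun t : ℝ => (l:ℂ)^2 • (Real.exp (-(l * t)) • S t w)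
                - Real.exp (-(l * t)) • S t z := by
            funext t
            show Real.exp (-(l * t)) • S t (((l ^ (2:ℝ) : ℝ):ℂ) • w - z) = _
            rw [map_sub, (S t).map_smul, smul_sub, hc2, smul_comm]
          have intw : IntegrableOn (fun t : ℝ => (l:ℂ)^2 • (Real.exp (-(l * t)) • S t w))
              (Ioi 0) := (myint_real (hS.cont w) (fun t ht => hKv w t ht) hl0).smul ((l:ℂ)^2)
          rw [heq, MeasureTheory.integral_sub intw
            (myint_real (hS.cont z) (fun t ht => hKv z t ht) hl0),
            MeasureTheory.integral_smul]
        rw [hFrealeq w l, hFrealeq z l, ← hexp2]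
        exact hleft
      -- the holomorphic function h
      have hH : IsOpen {lam : ℂ | 0 < lam.re} := isOpen_lt continuous_const Complex.continuous_re
      have hprec : IsPreconnected {lam : ℂ | 0 < lam.re} :=
        (convex_halfSpace_re_gt 0).isPreconnected
      set h : ℂ → X := fun lam => lam^2 • (∫ t in Ioi (0:ℝ), Complex.exp (-(lam * t)) • S t w)
          - (∫ t in Ioi (0:ℝ), Complex.exp (-(lam * t)) • S t z) - w with hhdef
      have hdiff : DifferentiableOn ℂ h {lam : ℂ | 0 < lam.re} := by
        apply DifferentiableOn.sub _ (differentiableOn_const w)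
        exact ((differentiable_pow 2).differentiableOn.smul (myFdiff hS.cont hK w)).sub
          (myFdiff hS.cont hK z)
      have hz0mem : ((max omega 0 + 1 : ℝ) : ℂ) ∈ {lam : ℂ | 0 < lam.re} := by
        simp only [mem_setOf_eq, Complex.ofReal_re]
        linarith [le_max_right omega 0]
      have hfreq : ∃ᶠ lam in nhdsWithin ((max omega 0 + 1 : ℝ) : ℂ)
          {((max omega 0 + 1 : ℝ) : ℂ)}ᶜ, h lam = 0 := by
        have hseq : Tendsto (fun n : ℕ => ((max omega 0 + 1 + 1/(n+1) : ℝ) : ℂ)) atTop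
            (nhdsWithin ((max omega 0 + 1 : ℝ) : ℂ) {((max omega 0 + 1 : ℝ) : ℂ)}ᶜ) := by
          apply tendsto_nhdsWithin_of_tendsto_nhds_of_eventually_within
          · have hr : Tendsto (fun n : ℕ => (max omega 0 + 1 + 1/(n+1) : ℝ)) atTop
                (𝓝 (max omega 0 + 1)) := by
              have h5 : Tendsto (fun n : ℕ => 1 / ((n:ℝ) + 1)) atTop (𝓝 0) :=
                tendsto_one_div_add_atTop_nhds_zero_nat
              simpa using tendsto_const_nhds.add h5
            exact (Complex.continuous_ofReal.tendsto _).comp hr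
          · apply Filter.Eventually.of_forall
            intro n
            simp only [mem_compl_iff, mem_singleton_iff]
            intro hcontra
            have h6 := Complex.ofReal_injective hcontra
            have h7 : (0:ℝ) < 1/(n+1:ℝ) := by positivity
            linarith
        apply hseq.frequently
        apply Filter.Eventually.frequently
        apply Filter.Eventually.of_forall
        intro n
        have h7 : (0:ℝ) < 1/(n+1:ℝ) := by positivity
        have h8 := hray (max omega 0 + 1 + 1/(n+1:ℝ)) (by linarith)
        simp only [hhdef]
        rw [sub_eq_zero]
        exact h8
      have hEqOn := (hdiff.analyticOnNhd hH).eqOn_zero_of_preconnected_of_frequently_eq_zero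
        hprec hz0mem hfreq
      -- the identity for all real l > 0
      have hid : ∀ l : ℝ, 0 < l →
          w = ((l:ℂ)^2) • (∫ t in Ioi (0:ℝ), Real.exp (-(l * t)) • S t w)
            - (∫ t in Ioi (0:ℝ), Real.exp (-(l * t)) • S t z) := by
        intro l hl
        have hmem : ((l:ℝ):ℂ) ∈ {lam : ℂ | 0 < lam.re} := by
          simp only [mem_setOf_eq, Complex.ofReal_re]; exact hl
        have h0 := hEqOn hmem
        simp only [hhdef, Pi.zero_apply] at h0
        rw [hFrealeq w l, hFrealeq z l] at h0
        exact (sub_eq_zero.mp h0).symm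
      -- quantitative estimates
      have hfin : ∀ δ : ℝ, 0 < δ → ‖w‖ ≤ δ := by
        intro δ hδ
        have htt : Tendsto (fun T : ℝ => 2*C^2*‖z‖ * (T/2) ^ (-eps)) atTop (𝓝 0) := by
          have h1 : Tendsto (fun T : ℝ => T/2) atTop atTop :=
            Tendsto.atTop_div_const two_pos tendsto_id
          have h2 := (tendsto_rpow_neg_atTop heps0).comp h1
          simpa using h2.const_mul (2*C^2*‖z‖)
        obtain ⟨T, hTd, hT2⟩ :=
          ((htt.eventually_lt_const (half_pos hδ)).and (eventually_ge_atTop (2:ℝ))).exists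
        have hc1 : (0:ℝ) ≤ K * ‖w‖ + T * (B * ‖z‖) := by
          nlinarith [mul_nonneg hK0 (norm_nonneg w), mul_nonneg hB0 (norm_nonneg z)]
        set l : ℝ := min 1 (δ / (2 * (K * ‖w‖ + T * (B * ‖z‖) + 1))) with hldef
        have hl0 : 0 < l := lt_min one_pos (by positivity)
        -- bound for the w-term
        have hIw : ‖∫ t in Ioi (0:ℝ), Real.exp (-(l * t)) • S t w‖ ≤ K * ‖w‖ * l⁻¹ := by
          have hb : ∀ᵐ (t:ℝ) ∂(volume.restrict (Ioi (0:ℝ))),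
              ‖Real.exp (-(l * t)) • S t w‖ ≤ K * ‖w‖ * Real.exp (-(l * t)) := by
            filter_upwards [MeasureTheory.ae_restrict_mem measurableSet_Ioi] with t ht
            rw [norm_smul, Real.norm_eq_abs, abs_of_pos (Real.exp_pos _)]
            calc Real.exp (-(l*t)) * ‖S t w‖ ≤ Real.exp (-(l*t)) * (K * ‖w‖) :=
                  mul_le_mul_of_nonneg_left (hKv w t (le_of_lt ht)) (Real.exp_pos _).le
              _ = K * ‖w‖ * Real.exp (-(l*t)) := mul_comm _ _
          have h1 := MeasureTheory.norm_integral_le_of_norm_le (myexpintb hl0 (K * ‖w‖) 0) hb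
          rw [MeasureTheory.integral_const_mul, myexpint hl0 0] at h1
          simpa using h1
        have int2 : IntegrableOn (fun t => Real.exp (-(l * t)) • G z t) (Ioi 0) :=
          myint_real (hGcont z) (fun t ht => hGbd z t ht) hl0
        have hsplit : (∫ t in Ioi (0:ℝ), Real.exp (-(l * t)) • G z t)
            = (∫ t in Ioc (0:ℝ) T, Real.exp (-(l * t)) • G z t)
              + ∫ t in Ioi T, Real.exp (-(l * t)) • G z t := by
          rw [← MeasureTheory.setIntegral_union (Ioc_disjoint_Ioi le_rfl) measurableSet_Ioi
            (int2.mono_set Ioc_subset_Ioi_self) (int2.mono_set (Ioi_subset_Ioi (by linarith))),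
            Ioc_union_Ioi_eq_Ioi (by linarith : (0:ℝ) ≤ T)]
        have h1 : ‖∫ t in Ioc (0:ℝ) T, Real.exp (-(l * t)) • G z t‖ ≤ B * ‖z‖ * T := by
          have hfin2 : volume (Ioc (0:ℝ) T) < ⊤ := by
            rw [Real.volume_Ioc]; exact ENNReal.ofReal_lt_top
          have hb2 : ∀ t ∈ Ioc (0:ℝ) T, ‖Real.exp (-(l * t)) • G z t‖ ≤ B * ‖z‖ := by
            intro t ht
            rw [norm_smul, Real.norm_eq_abs, abs_of_pos (Real.exp_pos _)]
            have he1 : Real.exp (-(l*t)) ≤ 1 :=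
              Real.exp_le_one_iff.mpr (by nlinarith [ht.1])
            have := hGbd z t ht.1.le
            nlinarith [Real.exp_pos (-(l*t)), norm_nonneg (G z t),
              mul_nonneg hB0 (norm_nonneg z)]
          have h3 := MeasureTheory.norm_setIntegral_le_of_norm_le_const hfin2
            hb2
          rw [Real.volume_real_Ioc_of_le (by linarith : (0:ℝ) ≤ T)] at h3
          calc ‖∫ t in Ioc (0:ℝ) T, Real.exp (-(l * t)) • G z t‖ ≤ B * ‖z‖ * (T - 0) := h3
            _ = B * ‖z‖ * T := by ring
        have h2 : ‖∫ t in Ioi T, Real.exp (-(l * t)) • G z t‖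
            ≤ (2*C^2*‖z‖ * (T/2) ^ (-eps)) * l⁻¹ := by
          have hb3 : ∀ᵐ (t:ℝ) ∂(volume.restrict (Ioi T)),
              ‖Real.exp (-(l * t)) • G z t‖
                ≤ (2*C^2*‖z‖ * (T/2) ^ (-eps)) * Real.exp (-(l * t)) := by
            filter_upwards [MeasureTheory.ae_restrict_mem measurableSet_Ioi] with t ht
            have htT : T < t := ht
            have h2t : (2:ℝ) ≤ t := by linarith
            have hmon : (t/2:ℝ) ^ (-eps) ≤ (T/2) ^ (-eps) :=
              Real.rpow_le_rpow_of_nonpos (by linarith) (by linarith) (by linarith)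
            have hcz : (0:ℝ) ≤ 2*C^2*‖z‖ := by positivity
            rw [norm_smul, Real.norm_eq_abs, abs_of_pos (Real.exp_pos _)]
            calc Real.exp (-(l*t)) * ‖G z t‖
                ≤ Real.exp (-(l*t)) * (2*C^2*‖z‖ * (T/2) ^ (-eps)) := by
                  refine mul_le_mul_of_nonneg_left ?_ (Real.exp_pos _).le
                  exact le_trans (hGdec z t h2t) (mul_le_mul_of_nonneg_left hmon hcz)
              _ = (2*C^2*‖z‖ * (T/2) ^ (-eps)) * Real.exp (-(l*t)) := mul_comm _ _
          have h3 := MeasureTheory.norm_integral_le_of_norm_le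
            (myexpintb hl0 (2*C^2*‖z‖ * (T/2) ^ (-eps)) T) hb3
          rw [MeasureTheory.integral_const_mul, myexpint hl0 T] at h3
          refine le_trans h3 ?_
          have he1 : Real.exp (-(l*T)) ≤ 1 := Real.exp_le_one_iff.mpr (by nlinarith)
          have hcz : (0:ℝ) ≤ 2*C^2*‖z‖ * (T/2) ^ (-eps) :=
            mul_nonneg (by positivity) (Real.rpow_nonneg (by linarith) _)
          have hinv : (0:ℝ) ≤ l⁻¹ := (inv_pos.mpr hl0).le
          nlinarith [mul_nonneg hcz hinv]
        -- assemble
        have hw := hid l hl0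
        have e4 : ‖((l:ℂ)^2) • (∫ t in Ioi (0:ℝ), Real.exp (-(l * t)) • S t w)‖
            ≤ l * (K * ‖w‖) := by
          rw [norm_smul, norm_pow, Complex.norm_real, Real.norm_eq_abs, abs_of_pos hl0]
          calc l^2 * ‖∫ t in Ioi (0:ℝ), Real.exp (-(l * t)) • S t w‖
              ≤ l^2 * (K * ‖w‖ * l⁻¹) := mul_le_mul_of_nonneg_left hIw (by positivity)
            _ = l * (K * ‖w‖) := by field_simp
        have e5 : ‖∫ t in Ioi (0:ℝ), Real.exp (-(l * t)) • S t z‖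
            ≤ l * (B * ‖z‖ * T) + 2*C^2*‖z‖ * (T/2) ^ (-eps) := by
          rw [hIBP z l hl0, norm_smul, Real.norm_eq_abs, abs_of_pos hl0, hsplit]
          calc l * ‖(∫ t in Ioc (0:ℝ) T, Real.exp (-(l * t)) • G z t)
                + ∫ t in Ioi T, Real.exp (-(l * t)) • G z t‖
              ≤ l * (B * ‖z‖ * T + (2*C^2*‖z‖ * (T/2) ^ (-eps)) * l⁻¹) := by
                refine mul_le_mul_of_nonneg_left ?_ hl0.le
                exact le_trans (norm_add_le _ _) (add_le_add h1 h2)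
            _ = l * (B * ‖z‖ * T) + 2*C^2*‖z‖ * (T/2) ^ (-eps) := by field_simp
        have e6 : ‖w‖ ≤ ‖((l:ℂ)^2) • (∫ t in Ioi (0:ℝ), Real.exp (-(l * t)) • S t w)‖
            + ‖∫ t in Ioi (0:ℝ), Real.exp (-(l * t)) • S t z‖ := by
          rw [congrArg norm hw]
          exact norm_sub_le _ _
        have hle : l * (K * ‖w‖) + l * (B * ‖z‖ * T) ≤ δ/2 := by
          have hlle : l ≤ δ / (2 * (K * ‖w‖ + T * (B * ‖z‖) + 1)) := min_le_right _ _
          have hpos : (0:ℝ) < 2 * (K * ‖w‖ + T * (B * ‖z‖) + 1) := by nlinarith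
          have h7 : l * (K * ‖w‖ + T * (B * ‖z‖))
              ≤ (δ / (2 * (K * ‖w‖ + T * (B * ‖z‖) + 1))) * (K * ‖w‖ + T * (B * ‖z‖)) :=
            mul_le_mul_of_nonneg_right hlle hc1
          have h8 : (δ / (2 * (K * ‖w‖ + T * (B * ‖z‖) + 1))) * (K * ‖w‖ + T * (B * ‖z‖))
              ≤ δ/2 := by
            rw [div_mul_eq_mul_div, div_le_div_iff₀ hpos two_pos]
            nlinarith
          nlinarith
        linarith [e4, e5, e6, hle, hTd.le]
      have hnorm0 : ‖w‖ ≤ 0 := by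
        by_contra hcon
        push_neg at hcon
        linarith [hfin (‖w‖/2) (by linarith)]
      exact norm_le_zero_iff.mp hnorm0
    -- conclude
    obtain ⟨R, hres, hlap⟩ := hS.laplace (max omega 0 + 1)
      (lt_of_le_of_lt (le_max_left omega 0) (lt_add_one _))
    have hRx : R x = 0 := hdom ⟨R x, hres.mem x⟩
    have hx := hres.right x
    have hz : (⟨R x, hres.mem x⟩ : A.domain) = 0 := Subtype.ext hRx
    rw [hz, hRx] at hx
    simpa using hx.symm
end
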